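/- Let μ, μ′ be probability measures on (X, B(X)) absolutely continuous with respect to a σ-finite measure ν, and h: X → [0,∞) measurable with finite positive evidences Z(μ) = ∫h dμ, Z(μ′) = ∫h dμ′. Define X* := {x : dμ/dν(x) ≥ dμ′/dν(x)} if Z(μ) ≥ Z(μ′) and X* := {x : dμ/dν(x) ≤ dμ′/dν(x)} otherwise. Suppose (i) ∫_{X*} h·|dμ/dν − dμ′/dν| dν ≤ (∫_{X*} h dν)·∫_{X*} |dμ/dν − dμ′/dν| dν, and (ii) ∫_{X*} h dν ≤ max(Z(μ), Z(μ′)). Then the posteriors P = Fμ, Q = Fμ′ satisfy d_TV(P, Q) ≤ d_TV(μ, μ′). -/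

import Mathlib

open MeasureTheory
open scoped Classical

private lemma aux18 {X : Type*} [MeasurableSpace X] (ν : Measure X)
    (π π' h : X → ℝ) (Z Z' : ℝ)
    (hπm : Measurable π) (hπ'm : Measurable π')
    (hπ'0 : ∀ x, 0 ≤ π' x) (hh0 : ∀ x, 0 ≤ h x)
    (hπ1 : ∫ x, π x ∂ν = 1) (hπ'1 : ∫ x, π' x ∂ν = 1)
    (hZ : Z = ∫ x, h x * π x ∂ν) (hZ' : Z' = ∫ x, h x * π' x ∂ν)
    (hZpos : 0 < Z) (hZ'pos : 0 < Z') (hZZ' : Z' ≤ Z)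
    (hint : Integrable (fun x => h x * π x) ν)
    (hint' : Integrable (fun x => h x * π' x) ν)
    (hi : ∫ x in {x | π' x ≤ π x}, h x * |π x - π' x| ∂ν ≤
      (∫ x in {x | π' x ≤ π x}, h x ∂ν) * ∫ x in {x | π' x ≤ π x}, |π x - π' x| ∂ν)
    (hii : ∫ x in {x | π' x ≤ π x}, h x ∂ν ≤ Z) :
    ∫ x, |h x * π x / Z - h x * π' x / Z'| ∂ν ≤ ∫ x, |π x - π' x| ∂ν := by
  set A : Set X := {x | π' x ≤ π x} with hAdef
  have hA : MeasurableSet A := measurableSet_le hπ'm hπm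
  have hZne : Z ≠ 0 := hZpos.ne'
  have hZ'ne : Z' ≠ 0 := hZ'pos.ne'
  have integπ : Integrable π ν := by
    by_contra hcon
    rw [integral_undef hcon] at hπ1; norm_num at hπ1
  have integπ' : Integrable π' ν := by
    by_contra hcon
    rw [integral_undef hcon] at hπ'1; norm_num at hπ'1
  have intd : Integrable (fun x => |π x - π' x|) ν := (integπ.sub integπ').abs
  have inthd : Integrable (fun x => h x * |π x - π' x|) ν := by
    have e : (fun x => h x * |π x - π' x|) = fun x => |h x * π x - h x * π' x| := by
      funext x; rw [← mul_sub, abs_mul, abs_of_nonneg (hh0 x)]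
    rw [e]; exact (hint.sub hint').abs
  have inths : Integrable (fun x => h x * (π x - π' x)) ν := by
    have e : (fun x => h x * (π x - π' x)) = fun x => h x * π x - h x * π' x := by
      funext x; ring
    rw [e]; exact hint.sub hint'
  -- notation
  set J := ∫ x in A, h x * |π x - π' x| ∂ν with hJdef
  set Jc := ∫ x in Aᶜ, h x * |π x - π' x| ∂ν with hJcdef
  set T := ∫ x, h x * |π x - π' x| ∂ν with hTdef
  set I := ∫ x in A, |π x - π' x| ∂ν with hIdef
  set H := ∫ x in A, h x ∂ν with hHdef
  have hT : T = J + Jc := (integral_add_compl hA inthd).symm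
  have hJA : ∫ x in A, h x * (π x - π' x) ∂ν = J := by
    refine setIntegral_congr_fun hA (fun x hx => ?_)
    rw [abs_of_nonneg (sub_nonneg.2 hx)]
  have hJCc : ∫ x in Aᶜ, h x * (π x - π' x) ∂ν = -Jc := by
    rw [hJcdef, ← integral_neg]
    refine setIntegral_congr_fun hA.compl (fun x hx => ?_)
    have hlt : π x < π' x := not_le.1 hx
    rw [abs_of_nonpos (by linarith)]
    ring
  have hD : Z - Z' = J - Jc := by
    have h1 : Z - Z' = ∫ x, h x * (π x - π' x) ∂ν := by
      rw [hZ, hZ', ← integral_sub hint hint']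
      congr 1; funext x; ring
    rw [h1, ← integral_add_compl hA inths, hJA, hJCc]; ring
  have hIsplit : ∫ x, |π x - π' x| ∂ν = 2 * I := by
    have h0 : ∫ x, (π x - π' x) ∂ν = 0 := by
      rw [integral_sub integπ integπ', hπ1, hπ'1]; ring
    have hIA : ∫ x in A, (π x - π' x) ∂ν = I := by
      refine setIntegral_congr_fun hA (fun x hx => ?_)
      rw [abs_of_nonneg (sub_nonneg.2 hx)]
    have hICc : ∫ x in Aᶜ, (π x - π' x) ∂ν = - ∫ x in Aᶜ, |π x - π' x| ∂ν := by
      rw [← integral_neg]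
      refine setIntegral_congr_fun hA.compl (fun x hx => ?_)
      have hlt : π x < π' x := not_le.1 hx
      rw [abs_of_nonpos (by linarith)]
      ring
    have hsplit0 := integral_add_compl hA (integπ.sub integπ')
    have hsplit1 := integral_add_compl hA intd
    simp only [Pi.sub_apply] at hsplit0
    rw [h0] at hsplit0
    rw [hIA, hICc] at hsplit0
    linarith [hsplit1, hsplit0]
  have hI0 : 0 ≤ I := setIntegral_nonneg hA (fun x _ => abs_nonneg _)
  -- pointwise bound
  have hbound : ∀ x, |h x * π x / Z - h x * π' x / Z'|
      ≤ h x * |π x - π' x| / Z + h x * π' x * (1/Z' - 1/Z) := by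
    intro x
    have key : h x * π x / Z - h x * π' x / Z'
        = h x * (π x - π' x) / Z + h x * π' x * (1/Z - 1/Z') := by
      field_simp; ring
    rw [key]
    have e1 : |h x * (π x - π' x) / Z| = h x * |π x - π' x| / Z := by
      rw [abs_div, abs_mul, abs_of_nonneg (hh0 x), abs_of_pos hZpos]
    have e2 : |h x * π' x * (1/Z - 1/Z')| = h x * π' x * (1/Z' - 1/Z) := by
      have h12 : 1/Z ≤ 1/Z' := one_div_le_one_div_of_le hZ'pos hZZ'
      rw [abs_mul, abs_of_nonneg (mul_nonneg (hh0 x) (hπ'0 x)), abs_of_nonpos (by linarith)]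
      ring
    calc |h x * (π x - π' x) / Z + h x * π' x * (1/Z - 1/Z')|
        ≤ |h x * (π x - π' x) / Z| + |h x * π' x * (1/Z - 1/Z')| := abs_add_le _ _
      _ = h x * |π x - π' x| / Z + h x * π' x * (1/Z' - 1/Z) := by rw [e1, e2]
  have hrhs_int : Integrable (fun x => h x * |π x - π' x| / Z + h x * π' x * (1/Z' - 1/Z)) ν :=
    (inthd.div_const Z).add (hint'.mul_const _)
  have step1 : ∫ x, |h x * π x / Z - h x * π' x / Z'| ∂ν
      ≤ ∫ x, (h x * |π x - π' x| / Z + h x * π' x * (1/Z' - 1/Z)) ∂ν :=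
    integral_mono_of_nonneg (Filter.Eventually.of_forall fun x => abs_nonneg _)
      hrhs_int (Filter.Eventually.of_forall hbound)
  have step2 : ∫ x, (h x * |π x - π' x| / Z + h x * π' x * (1/Z' - 1/Z)) ∂ν
      = T / Z + Z' * (1/Z' - 1/Z) := by
    rw [integral_add (inthd.div_const Z) (hint'.mul_const _), integral_div,
      integral_mul_const, ← hZ', ← hTdef]
  have hJZ : J ≤ Z * I := by
    have hH0 : 0 ≤ H := setIntegral_nonneg hA (fun x _ => hh0 x)
    calc J ≤ H * I := hi
      _ ≤ Z * I := mul_le_mul_of_nonneg_right hii hI0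
  have hE : T / Z + Z' * (1/Z' - 1/Z) = 2 * J / Z := by
    have e1 : Z' * (1/Z' - 1/Z) = 1 - Z'/Z := by
      field_simp
    rw [e1, show T = 2 * J - (Z - Z') from by linarith]
    field_simp
    ring
  calc ∫ x, |h x * π x / Z - h x * π' x / Z'| ∂ν
      ≤ T / Z + Z' * (1/Z' - 1/Z) := by rw [← step2]; exact step1
    _ = 2 * J / Z := hE
    _ ≤ 2 * I := by rw [div_le_iff₀ hZpos]; nlinarith
    _ = ∫ x, |π x - π' x| ∂ν := hIsplit.symm

/-- Error reduction by data assimilation under the total variation distance: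
with the set `X*` where the density of the prior of larger evidence dominates, if
(i) `∫_{X*} h·|π − π'| dν ≤ (∫_{X*} h dν)·∫_{X*} |π − π'| dν` and
(ii) `∫_{X*} h dν ≤ max Z Z'`, then the posteriors `P, Q` with densities
`h·π/Z`, `h·π'/Z'` satisfy `d_TV(P, Q) ≤ d_TV(μ, μ')`. -/
theorem stmt18 {X : Type*} [MeasurableSpace X] (ν : Measure X) [SigmaFinite ν]
    (π π' h : X → ℝ) (Z Z' : ℝ)
    (hπm : Measurable π) (hπ'm : Measurable π') (hhm : Measurable h)
    (hπ0 : ∀ x, 0 ≤ π x) (hπ'0 : ∀ x, 0 ≤ π' x) (hh0 : ∀ x, 0 ≤ h x)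
    (hπ1 : ∫ x, π x ∂ν = 1) (hπ'1 : ∫ x, π' x ∂ν = 1)
    (hZ : Z = ∫ x, h x * π x ∂ν) (hZ' : Z' = ∫ x, h x * π' x ∂ν)
    (hZpos : 0 < Z) (hZ'pos : 0 < Z')
    (hint : Integrable (fun x => h x * π x) ν)
    (hint' : Integrable (fun x => h x * π' x) ν)
    (Xstar : Set X)
    (hXstar : Xstar = if Z' ≤ Z then {x | π' x ≤ π x} else {x | π x ≤ π' x})
    (hi : ∫ x in Xstar, h x * |π x - π' x| ∂ν ≤
      (∫ x in Xstar, h x ∂ν) * ∫ x in Xstar, |π x - π' x| ∂ν)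
    (hii : ∫ x in Xstar, h x ∂ν ≤ max Z Z') :
    (1 / 2) * ∫ x, |h x * π x / Z - h x * π' x / Z'| ∂ν ≤
      (1 / 2) * ∫ x, |π x - π' x| ∂ν := by
  refine mul_le_mul_of_nonneg_left ?_ (by norm_num)
  by_cases hc : Z' ≤ Z
  · rw [hXstar, if_pos hc] at hi hii
    rw [max_eq_left hc] at hii
    exact aux18 ν π π' h Z Z' hπm hπ'm hπ'0 hh0 hπ1 hπ'1 hZ hZ' hZpos hZ'pos hc
      hint hint' hi hii
  · have hc' : Z ≤ Z' := le_of_not_ge hc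
    rw [hXstar, if_neg hc] at hi hii
    rw [max_eq_right hc'] at hii
    have habs : ∀ x, |π x - π' x| = |π' x - π x| := fun x => abs_sub_comm _ _
    simp_rw [habs] at hi ⊢
    have key := aux18 ν π' π h Z' Z hπ'm hπm hπ0 hh0 hπ'1 hπ1 hZ' hZ hZ'pos hZpos hc'
      hint' hint hi hii
    have e : (fun x => |h x * π x / Z - h x * π' x / Z'|)
        = fun x => |h x * π' x / Z' - h x * π x / Z| := funext fun x => abs_sub_comm _ _
    rw [e]
    exact key
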